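/- Suppose a coded polynomial aggregation scheme satisfies D(β_n) = F(E(β_n)) for all n ∈ 𝒩 where |𝒩| = N-S, deg D ≤ N-S-1, deg E ≤ K-1, deg F ≤ d, and the orthogonality conditions ∑_{k=0}^{K-1} w_k P_𝒩(α_k) α_k^j = 0 hold for all j = 0, ..., d(K-1)+S-N, where P_𝒩(z) = ∏_{n∈𝒩}(z-β_n) and α_0,...,α_{K-1}, β_n are all distinct. Then ∑_{k=0}^{K-1} w_k D(α_k) = ∑_{k=0}^{K-1} w_k F(E(α_k)). -/
import Mathlib

open Polynomial

theorem stmt_12 {ι : Type*} (K d S N : ℕ) (hK : 0 < K) (hd : 0 < d)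
    (hS : 0 < S) (hN1 : S + 2 ≤ N) (hN2 : N ≤ d * (K - 1) + S)
    (α : Fin K → ℂ) (hα : Function.Injective α)
    (w : Fin K → ℂ)
    (𝒩 : Finset ι) (hcard : 𝒩.card = N - S)
    (β : ι → ℂ) (hβ : Set.InjOn β 𝒩)
    (hdisj : ∀ n ∈ 𝒩, ∀ k, β n ≠ α k)
    (E F D : ℂ[X]) (hE : E.natDegree ≤ K - 1) (hF : F.natDegree ≤ d)
    (hD : D.natDegree ≤ N - S - 1)
    (hinterp : ∀ n ∈ 𝒩, D.eval (β n) = F.eval (E.eval (β n)))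
    (horth : ∀ j < d * (K - 1) + S + 1 - N,
      ∑ k, w k * (∏ n ∈ 𝒩, (X - C (β n))).eval (α k) * α k ^ j = 0) :
    ∑ k, w k * D.eval (α k) = ∑ k, w k * F.eval (E.eval (α k)) := by
  set P : ℂ[X] := ∏ n ∈ 𝒩, (X - C (β n)) with hP
  set G : ℂ[X] := F.comp E - D with hG
  have hPdvd : P ∣ G := by
    refine Finset.prod_dvd_of_coprime ?_ ?_
    · intro a ha b hb hab
      exact isCoprime_X_sub_C_of_isUnit_sub
        (sub_ne_zero_of_ne fun h => hab (hβ ha hb h)).isUnit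
    · intro n hn
      have : G.eval (β n) = 0 := by
        simp [hG, eval_comp, (hinterp n hn).symm]
      exact dvd_iff_isRoot.2 this
  obtain ⟨Q, hQ⟩ := hPdvd
  have hPmonic : P.Monic := monic_prod_of_monic _ _ fun n _ => monic_X_sub_C _
  have hPdeg : P.natDegree = N - S := by
    rw [hP, natDegree_prod_of_monic _ _ fun n _ => monic_X_sub_C _]
    simp [hcard]
  have hGdeg : G.natDegree ≤ d * (K - 1) := by
    have h1 : (F.comp E).natDegree ≤ d * (K - 1) := by
      rw [natDegree_comp]; exact Nat.mul_le_mul hF hE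
    have h2 : D.natDegree ≤ d * (K - 1) := le_trans hD (by omega)
    exact le_trans (natDegree_sub_le _ _) (max_le h1 h2)
  set M : ℕ := d * (K - 1) + S + 1 - N with hM
  have hQdeg : Q.natDegree < M := by
    rcases eq_or_ne Q 0 with rfl | hQ0
    · simp [hM]; omega
    · have := natDegree_mul (hPmonic.ne_zero) hQ0
      rw [← hQ, hPdeg] at this
      omega
  have key : ∑ k, w k * P.eval (α k) * Q.eval (α k) = 0 := by
    have : ∀ k : Fin K, w k * P.eval (α k) * Q.eval (α k)
        = ∑ j ∈ Finset.range M, Q.coeff j * (w k * P.eval (α k) * α k ^ j) := by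
      intro k
      rw [eval_eq_sum_range' hQdeg (α k), Finset.mul_sum]
      exact Finset.sum_congr rfl fun j _ => by ring
    rw [Finset.sum_congr rfl fun k _ => this k, Finset.sum_comm]
    refine Finset.sum_eq_zero fun j hj => ?_
    rw [← Finset.mul_sum, horth j (Finset.mem_range.1 hj), mul_zero]
  have hsum : ∑ k, w k * G.eval (α k) = 0 := by
    rw [hQ]
    simpa [mul_assoc] using key
  have : ∑ k, (w k * F.eval (E.eval (α k)) - w k * D.eval (α k)) = 0 := by
    simpa [hG, eval_comp, mul_sub] using hsum
  rw [Finset.sum_sub_distrib] at this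
  exact (sub_eq_zero.1 this).symm
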